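/- For positive integers k and n, Σ_{π ⊢ n} (−1)^{mex(π)−1} (mex(π))^k = Σ_{m≥0} (−1)^m ((m+1)^k + m^k) · p(n − m(m+1)/2), with p(j)=0 for j<0. -/
import Mathlib

open Finset

noncomputable def mex {n : ℕ} (π : Nat.Partition n) : ℕ :=
  sInf {m : ℕ | 0 < m ∧ m ∉ π.parts}

/-- Number of partitions of `n` with minimal excludant `m`. -/
noncomputable def pmex (m n : ℕ) : ℕ :=
  ((Finset.univ : Finset (Nat.Partition n)).filter (fun π => mex π = m)).card

/-- The partition function, extended by `0` on negative integers. -/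
noncomputable def pz (k : ℤ) : ℕ := if 0 ≤ k then Fintype.card (Nat.Partition k.toNat) else 0

/-- Number of partitions of `m` into distinct parts. -/
def qdist (m : ℕ) : ℕ := (Nat.Partition.distincts m).card

/-- A two-colored distinct-parts partition of `n`: a set of distinct (part, color)
pairs with positive parts summing to `n`. -/
def IsTCD (n : ℕ) (s : Finset (ℕ × Fin 2)) : Prop :=
  (∀ p ∈ s, 0 < p.1) ∧ ∑ p ∈ s, p.1 = n

noncomputable def D2 (n : ℕ) : ℕ := Set.ncard {s : Finset (ℕ × Fin 2) | IsTCD n s}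
noncomputable def D2e (n : ℕ) : ℕ :=
  Set.ncard {s : Finset (ℕ × Fin 2) | IsTCD n s ∧ Even s.card}
noncomputable def D2o (n : ℕ) : ℕ :=
  Set.ncard {s : Finset (ℕ × Fin 2) | IsTCD n s ∧ Odd s.card}

lemma sum_Icc_id (m : ℕ) : ∑ j ∈ Finset.Icc 1 m, j = m * (m + 1) / 2 := by
  have h : (∑ j ∈ Finset.Icc 1 m, j) * 2 = m * (m + 1) := by
    induction m with
    | zero => simp
    | succ m ih =>
      rw [Finset.sum_Icc_succ_top (by omega)]
      nlinarith
  omega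

lemma mex_mem {n : ℕ} (π : Nat.Partition n) :
    0 < mex π ∧ mex π ∉ π.parts := by
  have hne : {m : ℕ | 0 < m ∧ m ∉ π.parts}.Nonempty := by
    refine ⟨n + 1, Nat.succ_pos _, fun h => ?_⟩
    have := Multiset.single_le_sum (fun x _ => Nat.zero_le x) _ h
    rw [π.parts_sum] at this; omega
  exact Nat.sInf_mem hne

lemma mex_le {n : ℕ} (π : Nat.Partition n) : mex π ≤ n + 1 := by
  apply Nat.sInf_le
  refine ⟨Nat.succ_pos _, fun h => ?_⟩
  have := Multiset.single_le_sum (fun x _ => Nat.zero_le x) _ h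
  rw [π.parts_sum] at this; omega

lemma mex_gt_iff {n : ℕ} (π : Nat.Partition n) (m : ℕ) :
    m < mex π ↔ (Finset.Icc 1 m).val ≤ π.parts := by
  rw [Multiset.le_iff_subset (Finset.Icc 1 m).nodup]
  constructor
  · intro h j hj
    rw [Finset.mem_val, Finset.mem_Icc] at hj
    have hlt : j < mex π := by omega
    have := Nat.notMem_of_lt_sInf (s := {m : ℕ | 0 < m ∧ m ∉ π.parts}) hlt
    simp only [Set.mem_setOf_eq, not_and, not_not] at this
    exact this (by omega)
  · intro h
    by_contra hle
    push_neg at hle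
    obtain ⟨hpos, hnot⟩ := mex_mem π
    exact hnot (h (by rw [Finset.mem_val, Finset.mem_Icc]; omega))

/-- Bijection: partitions of `n` containing all of `1..m` correspond to partitions of
`n - m(m+1)/2`. -/
lemma card_contains (n m : ℕ) (h : m * (m + 1) / 2 ≤ n) :
    Fintype.card {π : Nat.Partition n // (Finset.Icc 1 m).val ≤ π.parts}
      = Fintype.card (Nat.Partition (n - m * (m + 1) / 2)) := by
  set s : Multiset ℕ := (Finset.Icc 1 m).val with hs
  have hsum : s.sum = m * (m + 1) / 2 := by
    rw [hs, show (Finset.Icc 1 m).val.sum = ∑ j ∈ Finset.Icc 1 m, j by rw [← Multiset.map_id ((Finset.Icc 1 m).val)]; rfl, sum_Icc_id]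
  apply Fintype.card_congr
  refine
    { toFun := fun π => ⟨π.1.parts - s, ?_, ?_⟩
      invFun := fun μ => ⟨⟨μ.parts + s, ?_, ?_⟩, ?_⟩
      left_inv := ?_
      right_inv := ?_ }
  · intro i hi
    exact π.1.parts_pos (Multiset.mem_of_le (tsub_le_self) hi)
  · have hc : π.1.parts - s + s = π.1.parts := tsub_add_cancel_of_le π.2
    have := congrArg Multiset.sum hc
    rw [Multiset.sum_add, hsum, π.1.parts_sum] at this
    omega
  · intro i hi
    rcases Multiset.mem_add.1 hi with h1 | h2
    · exact μ.parts_pos h1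
    · rw [hs, Finset.mem_val, Finset.mem_Icc] at h2; omega
  · rw [Multiset.sum_add, hsum, μ.parts_sum]; omega
  · exact Multiset.le_add_left _ _
  · intro π
    apply Subtype.ext
    apply Nat.Partition.ext
    exact tsub_add_cancel_of_le π.2
  · intro μ
    apply Nat.Partition.ext
    simp

lemma count_eq_pz (n m : ℕ) [DecidablePred fun π : Nat.Partition n => m < mex π] :
    ((Finset.univ.filter fun π : Nat.Partition n => m < mex π).card : ℤ)
      = pz ((n : ℤ) - (m * (m + 1) / 2 : ℕ)) := by
  classical
  by_cases h : m * (m + 1) / 2 ≤ n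
  · have h1 : (n : ℤ) - (m * (m + 1) / 2 : ℕ) = ((n - m * (m + 1) / 2 : ℕ) : ℤ) := by
      omega
    rw [h1, pz, if_pos (Int.ofNat_nonneg _), Int.toNat_natCast]
    have h2 : (Finset.univ.filter fun π : Nat.Partition n => m < mex π).card
        = Fintype.card {π : Nat.Partition n // m < mex π} := (Fintype.card_subtype _).symm
    have h3 : Fintype.card {π : Nat.Partition n // m < mex π}
        = Fintype.card {π : Nat.Partition n // (Finset.Icc 1 m).val ≤ π.parts} :=
      Fintype.card_congr (Equiv.subtypeEquivRight fun π => mex_gt_iff π m)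
    rw [h2, h3, card_contains n m h]
  · have hempty : (Finset.univ.filter fun π : Nat.Partition n => m < mex π) = ∅ := by
      rw [Finset.filter_eq_empty_iff]
      intro π _ hlt
      have hle := (mex_gt_iff π m).1 hlt
      have hsum : ((Finset.Icc 1 m).val : Multiset ℕ).sum ≤ π.parts.sum := by
        have hc : π.parts - (Finset.Icc 1 m).val + (Finset.Icc 1 m).val = π.parts :=
          tsub_add_cancel_of_le hle
        have := congrArg Multiset.sum hc
        rw [Multiset.sum_add] at this
        omega
      rw [π.parts_sum,
        show (Finset.Icc 1 m).val.sum = ∑ j ∈ Finset.Icc 1 m, j by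
          rw [← Multiset.map_id ((Finset.Icc 1 m).val)]; rfl,
        sum_Icc_id] at hsum
      omega
    rw [hempty, pz, if_neg (by omega)]
    simp

theorem kth_alternating_moment_mex (k n : ℕ) (hk : 0 < k) (hn : 0 < n) :
    ∑ π : Nat.Partition n, (-1 : ℤ) ^ (mex π - 1) * (mex π : ℤ) ^ k =
      ∑ m ∈ Finset.range (n + 1),
        (-1 : ℤ) ^ m * ((m + 1) ^ k + m ^ k) * pz ((n : ℤ) - (m * (m + 1) / 2 : ℕ)) := by
  classical
  set f : ℕ → ℤ := fun j => (-1 : ℤ) ^ (j - 1) * (j : ℤ) ^ k with hf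
  have hΔ : ∀ m : ℕ, f (m + 1) - f m = (-1 : ℤ) ^ m * (((m : ℤ) + 1) ^ k + (m : ℤ) ^ k) := by
    intro m
    cases m with
    | zero => simp [hf, zero_pow hk.ne']
    | succ m =>
      simp only [hf, Nat.add_sub_cancel]
      push_cast
      rw [pow_succ]
      ring
  have key : ∀ π : Nat.Partition n,
      (-1 : ℤ) ^ (mex π - 1) * (mex π : ℤ) ^ k
        = ∑ m ∈ Finset.range (n + 1),
            (if m < mex π then (-1 : ℤ) ^ m * (((m : ℤ) + 1) ^ k + (m : ℤ) ^ k) else 0) := by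
    intro π
    have h1 : (Finset.range (n + 1)).filter (fun m => m < mex π) = Finset.range (mex π) := by
      ext x
      simp only [Finset.mem_filter, Finset.mem_range]
      have := mex_le π
      omega
    rw [← Finset.sum_filter, h1]
    have h2 : ∑ m ∈ Finset.range (mex π), (-1 : ℤ) ^ m * (((m : ℤ) + 1) ^ k + (m : ℤ) ^ k)
        = f (mex π) - f 0 := by
      rw [← Finset.sum_range_sub f]
      exact Finset.sum_congr rfl fun m _ => (hΔ m).symm
    rw [h2]
    simp [hf, zero_pow hk.ne']
  calc ∑ π : Nat.Partition n, (-1 : ℤ) ^ (mex π - 1) * (mex π : ℤ) ^ k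
      = ∑ π : Nat.Partition n, ∑ m ∈ Finset.range (n + 1),
          (if m < mex π then (-1 : ℤ) ^ m * (((m : ℤ) + 1) ^ k + (m : ℤ) ^ k) else 0) :=
        Finset.sum_congr rfl fun π _ => key π
    _ = ∑ m ∈ Finset.range (n + 1), ∑ π : Nat.Partition n,
          (if m < mex π then (-1 : ℤ) ^ m * (((m : ℤ) + 1) ^ k + (m : ℤ) ^ k) else 0) :=
        Finset.sum_comm
    _ = ∑ m ∈ Finset.range (n + 1),
        (-1 : ℤ) ^ m * ((m + 1) ^ k + m ^ k) * pz ((n : ℤ) - (m * (m + 1) / 2 : ℕ)) := by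
        refine Finset.sum_congr rfl fun m _ => ?_
        rw [← Finset.sum_filter, Finset.sum_const, nsmul_eq_mul]
        push_cast [count_eq_pz n m]
        ring
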